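/- Let a be a Köthe matrix, let β : ℕ → ℝ be nondecreasing with β_n ≥ 0 and β_n → ∞, and let θ ∈ Λ_1(β). Assume that there exists m ∈ ℕ such that for every k ∈ ℕ there is C > 0 with e^{−β_n/k} ≤ C · a_{n,m} for all n ∈ ℕ. Then the Rhaly operator R_θ : K(a) → Λ_1(β) satisfies the compactness criterion: there exists m ∈ ℕ such that for every k ∈ ℕ there is C′ > 0 with, for every x ∈ K(a), R_θ x ∈ Λ_1(β) and ∑_{n=1}^∞ |(R_θ x)_n| e^{−β_n/k} ≤ C′ · ∑_{n=1}^∞ |x_n| a_{n,m} (the same m for all k). -/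

import Mathlib

open scoped BigOperators

/-- The Rhaly map: `(R_θ x)_n = (∑_{j≤n} x_j) · θ_n` (indices starting at 0). -/
noncomputable def rhaly (θ x : ℕ → ℂ) : ℕ → ℂ :=
  fun n => (∑ j ∈ Finset.range (n + 1), x j) * θ n

/-- If `θ ∈ Λ_1(β)` and there is one `m` with `e^{-β_n/k} ≤ C a_{n,m}` for
every `k ≥ 1` (some `C = C(k)`), then `R_θ : K(a) → Λ_1(β)` satisfies the compactness
criterion (the same `m` works for all `k`). -/
theorem rhaly_Kothe_to_powerSeriesFinite_compact
    (a : ℕ → ℕ → ℝ)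
    (ha_nonneg : ∀ n k, 0 ≤ a n k) (ha_mono : ∀ n k, a n k ≤ a n (k + 1))
    (ha_pos : ∀ n, ∃ k, 0 < a n k)
    (β : ℕ → ℝ) (hβ_mono : Monotone β) (hβ_nonneg : ∀ n, 0 ≤ β n)
    (hβ_top : Filter.Tendsto β Filter.atTop Filter.atTop)
    (θ : ℕ → ℂ)
    (hθ : ∀ k : ℕ, 0 < k → Summable fun n => ‖θ n‖ * Real.exp (-(β n) / k))
    (hcond : ∃ m : ℕ, ∀ k : ℕ, 0 < k → ∃ C : ℝ, 0 < C ∧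
      ∀ n, Real.exp (-(β n) / k) ≤ C * a n m) :
    ∃ m : ℕ, ∀ k : ℕ, 0 < k → ∃ C' : ℝ, 0 < C' ∧
      ∀ x : ℕ → ℂ, (∀ l, Summable fun n => ‖x n‖ * a n l) →
        Summable (fun n => ‖rhaly θ x n‖ * Real.exp (-(β n) / k)) ∧
          ∑' n, ‖rhaly θ x n‖ * Real.exp (-(β n) / k) ≤ C' * ∑' n, ‖x n‖ * a n m := by
  obtain ⟨m, hm⟩ := hcond
  refine ⟨m, fun k hk => ?_⟩
  obtain ⟨C, hC, hCle⟩ := hm (2 * k) (by positivity)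
  have hk' : (0:ℝ) < (k:ℝ) := by exact_mod_cast hk
  set S : ℝ := ∑' n, ‖θ n‖ * Real.exp (-(β n) / (2 * k : ℕ)) with hS_def
  have hθ2 : Summable fun n => ‖θ n‖ * Real.exp (-(β n) / (2 * k : ℕ)) :=
    hθ (2 * k) (by positivity)
  have hSnn : 0 ≤ S := tsum_nonneg fun n => by positivity
  refine ⟨C * (S + 1), mul_pos hC (by linarith), fun x hx => ?_⟩
  -- summability of the weighted x
  have hx2 : Summable fun j => ‖x j‖ * Real.exp (-(β j) / (2 * k : ℕ)) := by
    refine Summable.of_nonneg_of_le (fun j => by positivity)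
      (fun j => ?_) ((hx m).mul_left C)
    calc ‖x j‖ * Real.exp (-(β j) / (2 * k : ℕ))
        ≤ ‖x j‖ * (C * a j m) := by
          exact mul_le_mul_of_nonneg_left (hCle j) (norm_nonneg _)
      _ = C * (‖x j‖ * a j m) := by ring
  set T : ℝ := ∑' j, ‖x j‖ * Real.exp (-(β j) / (2 * k : ℕ)) with hT_def
  have hTnn : 0 ≤ T := tsum_nonneg fun j => by positivity
  -- key exponent split
  have hexp : ∀ j n : ℕ, j ≤ n →
      Real.exp (-(β n) / k) ≤
        Real.exp (-(β n) / (2 * k : ℕ)) * Real.exp (-(β j) / (2 * k : ℕ)) := by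
    intro j n hjn
    rw [← Real.exp_add, Real.exp_le_exp]
    have hβ : β j ≤ β n := hβ_mono hjn
    push_cast
    have h2k : (0:ℝ) < 2 * (k:ℝ) := by positivity
    rw [← add_div, div_le_div_iff₀ hk' h2k]
    nlinarith
  -- pointwise bound
  have hpt : ∀ n, ‖rhaly θ x n‖ * Real.exp (-(β n) / k) ≤
      (‖θ n‖ * Real.exp (-(β n) / (2 * k : ℕ))) * T := by
    intro n
    have h1 : ‖rhaly θ x n‖ ≤ (∑ j ∈ Finset.range (n + 1), ‖x j‖) * ‖θ n‖ := by
      rw [rhaly, norm_mul]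
      exact mul_le_mul_of_nonneg_right (norm_sum_le _ _) (norm_nonneg _)
    calc ‖rhaly θ x n‖ * Real.exp (-(β n) / k)
        ≤ ((∑ j ∈ Finset.range (n + 1), ‖x j‖) * ‖θ n‖) * Real.exp (-(β n) / k) := by
          exact mul_le_mul_of_nonneg_right h1 (Real.exp_nonneg _)
      _ = ‖θ n‖ * ∑ j ∈ Finset.range (n + 1), ‖x j‖ * Real.exp (-(β n) / k) := by
          simp only [Finset.sum_mul, Finset.mul_sum]
          exact Finset.sum_congr rfl fun j _ => by ring
      _ ≤ ‖θ n‖ * ∑ j ∈ Finset.range (n + 1),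
            ‖x j‖ * (Real.exp (-(β n) / (2 * k : ℕ)) * Real.exp (-(β j) / (2 * k : ℕ))) := by
          refine mul_le_mul_of_nonneg_left (Finset.sum_le_sum fun j hj => ?_) (norm_nonneg _)
          exact mul_le_mul_of_nonneg_left
            (hexp j n (Nat.lt_succ_iff.mp (Finset.mem_range.mp hj))) (norm_nonneg _)
      _ = (‖θ n‖ * Real.exp (-(β n) / (2 * k : ℕ))) *
            ∑ j ∈ Finset.range (n + 1), ‖x j‖ * Real.exp (-(β j) / (2 * k : ℕ)) := by
          rw [Finset.mul_sum, Finset.mul_sum]; congr 1; ext j; ring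
      _ ≤ (‖θ n‖ * Real.exp (-(β n) / (2 * k : ℕ))) * T := by
          refine mul_le_mul_of_nonneg_left ?_ (by positivity)
          exact Summable.sum_le_tsum _ (fun j _ => by positivity) hx2
  have hsum : Summable (fun n => ‖rhaly θ x n‖ * Real.exp (-(β n) / k)) :=
    Summable.of_nonneg_of_le (fun n => by positivity) hpt (hθ2.mul_right T)
  refine ⟨hsum, ?_⟩
  have hTA : T ≤ C * ∑' j, ‖x j‖ * a j m := by
    rw [← tsum_mul_left]
    refine Summable.tsum_le_tsum (fun j => ?_) hx2 ((hx m).mul_left C)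
    calc ‖x j‖ * Real.exp (-(β j) / (2 * k : ℕ))
        ≤ ‖x j‖ * (C * a j m) := mul_le_mul_of_nonneg_left (hCle j) (norm_nonneg _)
      _ = C * (‖x j‖ * a j m) := by ring
  have hAnn : 0 ≤ ∑' j, ‖x j‖ * a j m :=
    tsum_nonneg fun j => mul_nonneg (norm_nonneg _) (ha_nonneg j m)
  calc ∑' n, ‖rhaly θ x n‖ * Real.exp (-(β n) / k)
      ≤ ∑' n, (‖θ n‖ * Real.exp (-(β n) / (2 * k : ℕ))) * T :=
        Summable.tsum_le_tsum hpt hsum (hθ2.mul_right T)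
    _ = S * T := tsum_mul_right
    _ ≤ S * (C * ∑' j, ‖x j‖ * a j m) := mul_le_mul_of_nonneg_left hTA hSnn
    _ ≤ C * (S + 1) * ∑' j, ‖x j‖ * a j m := by nlinarith
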